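/- Let n ≥ 7 and let F be a disjoint union of k ≥ 1 cycles (each of length at least 3) with exactly n − 3 vertices in total, where n − 3 ≥ 4. Then F is potentially triangulable in the convex complete graph K_n. -/

import Mathlib

namespace ConvexTri

/-- `x` lies strictly inside the open arc from `a` to `b` (in the positive cyclic direction). -/
def InOpenArc (n : ℕ) (a b x : ZMod n) : Prop :=
  0 < (x - a).val ∧ (x - a).val < (b - a).val

/-- Two chords of the convex `n`-gon cross: the endpoints of one separate the endpoints of
the other on the cycle, i.e. exactly one endpoint of the second chord lies in each of the two
open arcs determined by the endpoints of the first chord. -/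
def Cross (n : ℕ) (e f : Sym2 (ZMod n)) : Prop :=
  ∃ a b c d : ZMod n, e = s(a, b) ∧ f = s(c, d) ∧
    InOpenArc n a b c ∧ InOpenArc n b a d

/-- Boundary edge of the convex `n`-gon. -/
def IsBoundary (n : ℕ) (e : Sym2 (ZMod n)) : Prop :=
  ∃ i : ZMod n, e = s(i, i + 1)

/-- A diagonal: an edge of `K_n` (a pair of distinct vertices) that is not a boundary edge. -/
def IsDiagonal (n : ℕ) (e : Sym2 (ZMod n)) : Prop :=
  ¬ e.IsDiag ∧ ¬ IsBoundary n e

/-- `K_n - F` admits a triangulation: `F` contains no boundary edge and there is a set of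
`n - 3` pairwise non-crossing diagonals disjoint from `F`. -/
def AdmitsTriangulation (n : ℕ) (F : Finset (Sym2 (ZMod n))) : Prop :=
  (∀ e ∈ F, ¬ IsBoundary n e) ∧
  ∃ T : Finset (Sym2 (ZMod n)), T.card = n - 3 ∧
    (∀ e ∈ T, IsDiagonal n e) ∧
    (∀ e ∈ T, ∀ f ∈ T, ¬ Cross n e f) ∧
    (∀ e ∈ T, e ∉ F)

/-- Degree of a vertex in an edge set. -/
def deg (n : ℕ) (F : Finset (Sym2 (ZMod n))) (v : ZMod n) : ℕ :=
  (F.filter (fun e => v ∈ e)).card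

/-- A pendant vertex of `F` is a vertex of degree 1. -/
def Pendant (n : ℕ) (F : Finset (Sym2 (ZMod n))) (v : ZMod n) : Prop :=
  deg n F v = 1

/-- `F` has no isolated vertices. -/
def NoIsolated (n : ℕ) (F : Finset (Sym2 (ZMod n))) : Prop :=
  ∀ v : ZMod n, 0 < deg n F v

/-- A relabeling of the vertices by a rotation and possibly a reflection of the cyclic order. -/
def IsDihedral (n : ℕ) (φ : ZMod n → ZMod n) : Prop :=
  (∃ c : ZMod n, φ = fun x => c + x) ∨ (∃ c : ZMod n, φ = fun x => c - x)

/-- The explicit shape of the configuration `F_n(*)` (before relabeling). -/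
def FStarShape (n : ℕ) (F : Finset (Sym2 (ZMod n))) : Prop :=
  F = (Finset.image (fun i : ℕ => s((0 : ZMod n), (i : ZMod n))) (Finset.Icc 2 (n - 2))) ∪
      {s((1 : ZMod n), (-1 : ZMod n))} ∨
  ∃ k : ℕ, 2 ≤ k ∧ k ≤ n - 4 ∧
    (∀ i : ℕ, i < k → 2 ≤ deg n F (i : ZMod n) ∧
      s((i : ZMod n) - 1, (i : ZMod n) + 1) ∈ F) ∧
    (∀ i : ℕ, k ≤ i → i ≤ n - 1 → deg n F (i : ZMod n) = 1 ∧
      ∀ w : ZMod n, s((i : ZMod n), w) ∈ F → ¬ Pendant n F w) ∧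
    (∀ u v i j : ZMod n, Pendant n F u → Pendant n F v →
      s(u, i) ∈ F → s(v, j) ∈ F → Cross n s(u, i) s(v, j) → i = j + 1 ∨ j = i + 1)

/-- `F` has the configuration `F_n(*)`. -/
def IsFStar (n : ℕ) (F : Finset (Sym2 (ZMod n))) : Prop :=
  (∀ e ∈ F, ¬ e.IsDiag) ∧ NoIsolated n F ∧ F.card = n - 2 ∧
  ∃ φ : ZMod n → ZMod n, IsDihedral n φ ∧ FStarShape n (F.image (Sym2.map φ))

/-- Relabeling map after deleting the vertex `i`: the remaining `n - 1` vertices in their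
induced cyclic order. -/
def delMap (n : ℕ) (i : ZMod n) (x : ZMod n) : ZMod (n - 1) :=
  (((x - i).val - 1 : ℕ) : ZMod (n - 1))

/-- `F` with the vertex `i` deleted, as an edge set on the remaining `n - 1` vertices
in their induced cyclic order. -/
def delete (n : ℕ) (F : Finset (Sym2 (ZMod n))) (i : ZMod n) :
    Finset (Sym2 (ZMod (n - 1))) :=
  (F.filter (fun e => i ∉ e)).image (Sym2.map (delMap n i))

/-- `F` has the configuration `J_n(*)`. -/
def IsJStar (n : ℕ) (F : Finset (Sym2 (ZMod n))) : Prop :=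
  (∀ e ∈ F, ¬ e.IsDiag) ∧ NoIsolated n F ∧ F.card = n - 1 ∧
  (∀ i : ZMod n, s(i - 1, i + 1) ∉ F → deg n F i ≤ 2) ∧
  (∀ i : ZMod n, s(i - 1, i + 1) ∉ F → deg n F i = 2 → IsFStar (n - 1) (delete n F i))

/-- `J_{n,k}`: the set of vertices `v_i` of degree `k` in `F` with `v_{i-1}v_{i+1} ∉ F`. -/
def Jset (n k : ℕ) (F : Finset (Sym2 (ZMod n))) : Set (ZMod n) :=
  {i | deg n F i = k ∧ s(i - 1, i + 1) ∉ F}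

/-- `F` is a configuration `J_n(*)` of Type-1. -/
def IsJStarType1 (n : ℕ) (F : Finset (Sym2 (ZMod n))) : Prop :=
  IsJStar n F ∧ Jset n 2 F = ∅ ∧ ∃ e ∈ F, IsFStar n (F.erase e)

/-- `F` is a configuration `J_n(*)` of Type-2. -/
def IsJStarType2 (n : ℕ) (F : Finset (Sym2 (ZMod n))) : Prop :=
  IsJStar n F ∧ (Jset n 2 F).Nonempty ∧
  ∀ i ∈ Jset n 2 F, ∀ j₁ j₂ t w : ZMod n,
    s(i, j₁) ∈ F → s(i, j₂) ∈ F → j₁ ≠ j₂ →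
    Pendant n F t → s(t, w) ∈ F →
    Cross n s(t, w) s(i, j₁) → Cross n s(t, w) s(i, j₂) →
    j₁ = w + 1 ∨ w = j₁ + 1 ∨ j₂ = w + 1 ∨ w = j₂ + 1

/-- A Hamiltonian cycle of the convex complete graph `K_n`, as an edge set. -/
def IsHamCycle (n : ℕ) (H : Finset (Sym2 (ZMod n))) : Prop :=
  ∃ g : ZMod n ≃ ZMod n,
    H = Finset.image (fun i : ℕ => s(g (i : ZMod n), g ((i : ZMod n) + 1)))
      (Finset.range n) ∧ H.card = n

/-- A graph `G` is potentially triangulable in `K_n` if its vertices can be placed injectively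
on the vertices of `K_n` so that `K_n` minus the image of the edge set of `G` admits a
triangulation. -/
def PotentiallyTriangulable {V : Type*} (G : SimpleGraph V) (n : ℕ) : Prop :=
  ∃ f : V → ZMod n, Function.Injective f ∧
    ∃ F' : Finset (Sym2 (ZMod n)),
      (F' : Set (Sym2 (ZMod n))) = Sym2.map f '' G.edgeSet ∧
      AdmitsTriangulation n F'


section Aux

lemma coe_append' {α : Type*} (l₁ l₂ : List α) :
    ((l₁ ++ l₂ : List α) : Multiset α) = (l₁ : Multiset α) + (l₂ : Multiset α) := rfl

variable {V : Type} [Fintype V]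

/-- A list is good if consecutive entries are non-adjacent. -/
def Goodl (G : SimpleGraph V) (l : List V) : Prop :=
  l.Chain' (fun a b => ¬ G.Adj a b)

omit [Fintype V] in
lemma goodl_reverse {G : SimpleGraph V} {l : List V} (h : Goodl G l) : Goodl G l.reverse := by
  rw [Goodl, List.Chain', List.isChain_reverse]
  exact List.IsChain.imp (fun a b hab hba => hab (hba.symm)) h

omit [Fintype V] in
lemma goodl_merge {G : SimpleGraph V} {A X : List V} (hA : Goodl G A) (hX : Goodl G X)
    (h : ∀ x ∈ A.head?, ∀ y ∈ X.head?, ¬ G.Adj x y) : Goodl G (A.reverse ++ X) := by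
  rw [Goodl, List.Chain', List.isChain_append]
  refine ⟨goodl_reverse hA, hX, ?_⟩
  simpa [List.getLast?_reverse] using h

omit [Fintype V] in
lemma chain_consec {G : SimpleGraph V} {l : List V} (h : Goodl G l) {i : ℕ}
    (hi : i + 1 < l.length) :
    ¬ G.Adj (l.get ⟨i, by omega⟩) (l.get ⟨i + 1, hi⟩) := by
  rw [Goodl, List.Chain', List.isChain_iff_getElem] at h
  exact h i (by omega)

/-- A valid family of lists: each list good, and together they enumerate all vertices. -/
def ValidF (G : SimpleGraph V) (Ls : List (List V)) : Prop :=
  (∀ l ∈ Ls, Goodl G l) ∧ ((Ls.flatten : List V) : Multiset V) = (Finset.univ : Finset V).val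

lemma exists_three_lists (G : SimpleGraph V) [DecidableRel G.Adj]
    (hreg : ∀ v : V, G.degree v = 2) :
    ∃ L1 L2 L3 : List V, Goodl G L1 ∧ Goodl G L2 ∧ Goodl G L3 ∧
      ((L1 ++ L2 ++ L3 : List V) : Multiset V) = (Finset.univ : Finset V).val := by
  classical
  have h0 : ∃ Ls : List (List V), ValidF G Ls := by
    refine ⟨(Finset.univ : Finset V).toList.map (fun v => [v]), ?_, ?_⟩
    · intro l hl
      simp only [List.mem_map] at hl
      obtain ⟨v, _, rfl⟩ := hl
      exact List.isChain_singleton v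
    · have : ((Finset.univ : Finset V).toList.map (fun v => [v])).flatten
          = (Finset.univ : Finset V).toList := by
        induction (Finset.univ : Finset V).toList with
        | nil => simp
        | cons a t ih => simp [ih]
      rw [this]
      exact Finset.coe_toList _
  suffices H : ∀ c : ℕ, ∀ Ls : List (List V), Ls.length = c → ValidF G Ls →
      ∃ L1 L2 L3 : List V, Goodl G L1 ∧ Goodl G L2 ∧ Goodl G L3 ∧
        ((L1 ++ L2 ++ L3 : List V) : Multiset V) = (Finset.univ : Finset V).val by
    obtain ⟨Ls, hLs⟩ := h0
    exact H Ls.length Ls rfl hLs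
  intro c
  induction c using Nat.strong_induction_on with
  | _ c ih =>
    intro Ls hlen hval
    match Ls, hlen with
    | [], hlen =>
      exact ⟨[], [], [], List.isChain_nil, List.isChain_nil, List.isChain_nil, by
        simpa using hval.2⟩
    | [A], hlen =>
      exact ⟨A, [], [], hval.1 A (by simp), List.isChain_nil, List.isChain_nil, by
        simpa using hval.2⟩
    | [A, B], hlen =>
      exact ⟨A, B, [], hval.1 A (by simp), hval.1 B (by simp), List.isChain_nil, by
        simpa using hval.2⟩
    | [A, B, C], hlen =>
      exact ⟨A, B, C, hval.1 A (by simp), hval.1 B (by simp), hval.1 C (by simp), by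
        simpa using hval.2⟩
    | A :: B :: C :: D :: rest, hlen =>
      obtain ⟨hg, hm⟩ := hval
      have hgA : Goodl G A := hg A (by simp)
      have hgB : Goodl G B := hg B (by simp)
      have hgC : Goodl G C := hg C (by simp)
      have hgD : Goodl G D := hg D (by simp)
      have key : ∃ X Y Z : List V, Goodl G X ∧ Goodl G Y ∧ Goodl G Z ∧
          ((X : Multiset V) + Y + Z = (A : Multiset V) + B + C + D) := by
        by_cases hAe : A = []
        · exact ⟨B, C, D, hgB, hgC, hgD, by subst hAe; simp⟩
        by_cases hBe : B = []
        · exact ⟨A, C, D, hgA, hgC, hgD, by subst hBe; simp⟩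
        by_cases hCe : C = []
        · exact ⟨A, B, D, hgA, hgB, hgD, by subst hCe; simp⟩
        by_cases hDe : D = []
        · exact ⟨A, B, C, hgA, hgB, hgC, by subst hDe; simp⟩
        obtain ⟨a, A', rfl⟩ := List.exists_cons_of_ne_nil hAe
        obtain ⟨b, B', rfl⟩ := List.exists_cons_of_ne_nil hBe
        obtain ⟨c', C', rfl⟩ := List.exists_cons_of_ne_nil hCe
        obtain ⟨d, D', rfl⟩ := List.exists_cons_of_ne_nil hDe
        have hnd : ((a :: A') :: (b :: B') :: (c' :: C') :: (d :: D') :: rest).flatten.Nodup := by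
          rw [← Multiset.coe_nodup, hm]
          exact (Finset.univ : Finset V).nodup
        have hab : a ≠ b := by
          intro h; subst h
          simp only [List.flatten_cons, List.nodup_append] at hnd
          exact hnd.2.2 _ List.mem_cons_self _ (by simp) rfl
        have hac : a ≠ c' := by
          intro h; subst h
          simp only [List.flatten_cons, List.nodup_append] at hnd
          exact hnd.2.2 _ List.mem_cons_self _ (by simp) rfl
        have had : a ≠ d := by
          intro h; subst h
          simp only [List.flatten_cons, List.nodup_append] at hnd
          exact hnd.2.2 _ List.mem_cons_self _ (by simp) rfl
        have hbc : b ≠ c' := by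
          intro h; subst h
          simp only [List.flatten_cons, List.nodup_append] at hnd
          exact hnd.2.1.2.2 _ List.mem_cons_self _ (by simp) rfl
        have hbd : b ≠ d := by
          intro h; subst h
          simp only [List.flatten_cons, List.nodup_append] at hnd
          exact hnd.2.1.2.2 _ List.mem_cons_self _ (by simp) rfl
        have hcd : c' ≠ d := by
          intro h; subst h
          simp only [List.flatten_cons, List.nodup_append] at hnd
          exact hnd.2.1.2.1.2.2 _ List.mem_cons_self _ (by simp) rfl
        have hdeg : (G.neighborFinset a).card = 2 := by
          rw [SimpleGraph.card_neighborFinset_eq_degree]; exact hreg a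
        have hnon : ¬ G.Adj a b ∨ ¬ G.Adj a c' ∨ ¬ G.Adj a d := by
          by_contra h
          push_neg at h
          obtain ⟨h1, h2, h3⟩ := h
          have hsub : ({b, c', d} : Finset V) ⊆ G.neighborFinset a := by
            intro x hx
            simp only [Finset.mem_insert, Finset.mem_singleton] at hx
            rcases hx with rfl | rfl | rfl <;>
              simp [SimpleGraph.mem_neighborFinset, h1, h2, h3]
          have h3c : ({b, c', d} : Finset V).card = 3 := by
            rw [Finset.card_insert_of_notMem (by simp [hbc, hbd]),
              Finset.card_insert_of_notMem (by simp [hcd]), Finset.card_singleton]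
          have := Finset.card_le_card hsub
          omega
        rcases hnon with h | h | h
        · refine ⟨(a :: A').reverse ++ (b :: B'), c' :: C', d :: D',
            goodl_merge hgA hgB (by simpa using h), hgC, hgD, ?_⟩
          rw [coe_append', Multiset.coe_reverse]
        · refine ⟨(a :: A').reverse ++ (c' :: C'), b :: B', d :: D',
            goodl_merge hgA hgC (by simpa using h), hgB, hgD, ?_⟩
          rw [coe_append', Multiset.coe_reverse]; abel
        · refine ⟨(a :: A').reverse ++ (d :: D'), b :: B', c' :: C',
            goodl_merge hgA hgD (by simpa using h), hgB, hgC, ?_⟩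
          rw [coe_append', Multiset.coe_reverse]; abel
      obtain ⟨X, Y, Z, hX, hY, hZ, hsum⟩ := key
      refine ih (c - 1) (by simp only [List.length_cons] at hlen; omega) (X :: Y :: Z :: rest)
        (by simp only [List.length_cons] at hlen ⊢; omega) ⟨?_, ?_⟩
      · intro l hl
        simp only [List.mem_cons] at hl
        rcases hl with rfl | rfl | rfl | hl
        · exact hX
        · exact hY
        · exact hZ
        · exact hg l (by simp [hl])
      · rw [← hm]
        simp only [List.flatten_cons, coe_append']
        rw [show ((X : Multiset V) + (↑Y + (↑Z + ↑rest.flatten)))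
            = ((X : Multiset V) + ↑Y + ↑Z) + ↑rest.flatten by abel, hsum]
        abel

lemma placement (G : SimpleGraph V) [DecidableRel G.Adj] (n : ℕ) (hn : 7 ≤ n)
    (hcard : Fintype.card V = n - 3)
    (hL : ∃ L1 L2 L3 : List V, Goodl G L1 ∧ Goodl G L2 ∧ Goodl G L3 ∧
      ((L1 ++ L2 ++ L3 : List V) : Multiset V) = (Finset.univ : Finset V).val) :
    ∃ f : V → ZMod n, Function.Injective f ∧ (∀ v, f v ≠ 0) ∧
      ∀ u v : V, G.Adj u v → f u ≠ f v + 1 := by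
  classical
  obtain ⟨L1, L2, L3, h1, h2, h3, hm⟩ := hL
  have hndL : (L1 ++ L2 ++ L3).Nodup := by
    rw [← Multiset.coe_nodup, hm]; exact (Finset.univ : Finset V).nodup
  have hmemL : ∀ v : V, v ∈ L1 ++ L2 ++ L3 := by
    intro v
    have : v ∈ ((L1 ++ L2 ++ L3 : List V) : Multiset V) := by
      rw [hm]; exact Finset.mem_univ v
    simpa using this
  have hlenL : L1.length + L2.length + L3.length = n - 3 := by
    have := congrArg Multiset.card hm
    simp [hcard] at this
    omega
  set m1 := L1.length with hm1
  set m2 := L2.length with hm2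
  set m3 := L3.length with hm3
  set idx : V → ℕ := fun v =>
    if v ∈ L1 then 1 + L1.idxOf v
    else if v ∈ L2 then 2 + m1 + L2.idxOf v
    else 3 + m1 + m2 + L3.idxOf v with hidx
  have hnd1 : L1.Nodup := (List.nodup_append.1 (List.nodup_append.1 hndL).1).1
  have hnd2 : L2.Nodup := (List.nodup_append.1 (List.nodup_append.1 hndL).1).2.1
  have hnd3 : L3.Nodup := (List.nodup_append.1 hndL).2.1
  have hdisj12 : ∀ v ∈ L1, v ∉ L2 := fun v hv hv2 =>
    (List.nodup_append.1 (List.nodup_append.1 hndL).1).2.2 v hv v hv2 rfl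
  have hdisj13 : ∀ v ∈ L1, v ∉ L3 := fun v hv hv3 =>
    (List.nodup_append.1 hndL).2.2 v (by simp [hv]) v hv3 rfl
  have hdisj23 : ∀ v ∈ L2, v ∉ L3 := fun v hv hv3 =>
    (List.nodup_append.1 hndL).2.2 v (by simp [hv]) v hv3 rfl
  have hidx1 : ∀ v ∈ L1, idx v = 1 + L1.idxOf v ∧ 1 ≤ idx v ∧ idx v ≤ m1 := by
    intro v hv
    have hlt : L1.idxOf v < m1 := List.idxOf_lt_length_iff.2 hv
    have he : idx v = 1 + L1.idxOf v := by simp [hidx, hv]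
    omega
  have hidx2 : ∀ v ∈ L2, idx v = 2 + m1 + L2.idxOf v ∧ m1 + 2 ≤ idx v ∧ idx v ≤ m1 + m2 + 1 := by
    intro v hv
    have hlt : L2.idxOf v < m2 := List.idxOf_lt_length_iff.2 hv
    have hv1 : v ∉ L1 := fun h => hdisj12 v h hv
    have he : idx v = 2 + m1 + L2.idxOf v := by simp [hidx, hv, hv1]
    omega
  have hidx3 : ∀ v ∈ L3, idx v = 3 + m1 + m2 + L3.idxOf v ∧
      m1 + m2 + 3 ≤ idx v ∧ idx v ≤ m1 + m2 + m3 + 2 := by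
    intro v hv
    have hlt : L3.idxOf v < m3 := List.idxOf_lt_length_iff.2 hv
    have hv1 : v ∉ L1 := fun h => hdisj13 v h hv
    have hv2 : v ∉ L2 := fun h => hdisj23 v h hv
    have he : idx v = 3 + m1 + m2 + L3.idxOf v := by simp [hidx, hv1, hv2]
    omega
  have hcases : ∀ v : V, v ∈ L1 ∨ v ∈ L2 ∨ v ∈ L3 := by
    intro v; have := hmemL v; simpa using this
  have hrange : ∀ v : V, 1 ≤ idx v ∧ idx v ≤ n - 1 := by
    intro v
    rcases hcases v with hv | hv | hv
    · have := (hidx1 v hv); omega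
    · have := (hidx2 v hv); omega
    · have := (hidx3 v hv); omega
  have hinj : ∀ u v : V, idx u = idx v → u = v := by
    intro u v huv
    rcases hcases u with hu | hu | hu <;> rcases hcases v with hv | hv | hv
    · have au := hidx1 u hu; have av := hidx1 v hv
      have : L1.idxOf u = L1.idxOf v := by omega
      have hu' := List.idxOf_get (List.idxOf_lt_length_iff.2 hu)
      have hv' := List.idxOf_get (List.idxOf_lt_length_iff.2 hv)
      rw [← hu', ← hv']
      congr 1
      exact Fin.ext this
    · have au := hidx1 u hu; have av := hidx2 v hv; omega
    · have au := hidx1 u hu; have av := hidx3 v hv; omega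
    · have au := hidx2 u hu; have av := hidx1 v hv; omega
    · have au := hidx2 u hu; have av := hidx2 v hv
      have : L2.idxOf u = L2.idxOf v := by omega
      have hu' := List.idxOf_get (List.idxOf_lt_length_iff.2 hu)
      have hv' := List.idxOf_get (List.idxOf_lt_length_iff.2 hv)
      rw [← hu', ← hv']; congr 1; exact Fin.ext this
    · have au := hidx2 u hu; have av := hidx3 v hv; omega
    · have au := hidx3 u hu; have av := hidx1 v hv; omega
    · have au := hidx3 u hu; have av := hidx2 v hv; omega
    · have au := hidx3 u hu; have av := hidx3 v hv
      have : L3.idxOf u = L3.idxOf v := by omega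
      have hu' := List.idxOf_get (List.idxOf_lt_length_iff.2 hu)
      have hv' := List.idxOf_get (List.idxOf_lt_length_iff.2 hv)
      rw [← hu', ← hv']; congr 1; exact Fin.ext this
  have hstep : ∀ u v : V, G.Adj u v → idx u ≠ idx v + 1 := by
    intro u v hadj huv
    have hconsec : ∀ (L : List V) (hL' : Goodl G L), u ∈ L → v ∈ L →
        L.idxOf u = L.idxOf v + 1 → False := by
      intro L hL' hu hv hiuv
      have hltu : L.idxOf u < L.length := List.idxOf_lt_length_iff.2 hu
      have hltv : L.idxOf v < L.length := List.idxOf_lt_length_iff.2 hv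
      have h := chain_consec hL' (i := L.idxOf v) (by omega)
      rw [List.idxOf_get hltv] at h
      have hfin : (⟨L.idxOf v + 1, by omega⟩ : Fin L.length) = ⟨L.idxOf u, hltu⟩ :=
        Fin.ext (by simp only [Fin.val_mk]; omega)
      rw [hfin, List.idxOf_get] at h
      exact h hadj.symm
    rcases hcases u with hu | hu | hu <;> rcases hcases v with hv | hv | hv
    · have au := hidx1 u hu; have av := hidx1 v hv
      exact hconsec L1 h1 hu hv (by omega)
    · have au := hidx1 u hu; have av := hidx2 v hv; omega
    · have au := hidx1 u hu; have av := hidx3 v hv; omega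
    · have au := hidx2 u hu; have av := hidx1 v hv; omega
    · have au := hidx2 u hu; have av := hidx2 v hv
      exact hconsec L2 h2 hu hv (by omega)
    · have au := hidx2 u hu; have av := hidx3 v hv; omega
    · have au := hidx3 u hu; have av := hidx1 v hv
      have hr := hrange u; omega
    · have au := hidx3 u hu; have av := hidx2 v hv
      have hr := hrange u; omega
    · have au := hidx3 u hu; have av := hidx3 v hv
      exact hconsec L3 h3 hu hv (by omega)
  haveI : NeZero n := ⟨by omega⟩
  refine ⟨fun v => (idx v : ZMod n), ?_, ?_, ?_⟩
  · intro u v huv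
    apply hinj
    have hu := hrange u; have hv := hrange v
    have := congrArg ZMod.val huv
    rwa [ZMod.val_cast_of_lt (by omega), ZMod.val_cast_of_lt (by omega)] at this
  · intro v h
    have hv := hrange v
    have := congrArg ZMod.val h
    rw [ZMod.val_cast_of_lt (by omega), ZMod.val_zero] at this
    omega
  · intro u v hadj h
    have hu := hrange u; have hv := hrange v
    have h' : ((idx u : ℕ) : ZMod n) = ((idx v + 1 : ℕ) : ZMod n) := by push_cast; exact h
    by_cases hcase : idx v + 1 < n
    · have := congrArg ZMod.val h'
      rw [ZMod.val_cast_of_lt (by omega), ZMod.val_cast_of_lt hcase] at this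
      exact hstep u v hadj this
    · have hveq : idx v + 1 = n := by omega
      rw [hveq, ZMod.natCast_self] at h'
      have := congrArg ZMod.val h'
      rw [ZMod.val_cast_of_lt (by omega), ZMod.val_zero] at this
      omega

end Aux

/-- Two chords sharing the vertex `0` never cross. -/
lemma not_cross_shared (n : ℕ) (x y : ZMod n) : ¬ Cross n s(0, x) s(0, y) := by
  rintro ⟨a, b, c, d, he, hf, ⟨h1l, h1r⟩, ⟨h2l, h2r⟩⟩
  rw [Sym2.eq_iff] at he hf
  rcases hf with ⟨hc, hd⟩ | ⟨hc, hd⟩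
  · -- c = 0
    rw [← hc] at h1l h1r
    rcases he with ⟨ha, hb⟩ | ⟨hb, ha⟩
    · rw [← ha] at h1l
      simp at h1l
    · rw [← hb, ← ha] at h1r
      omega
  · -- d = 0
    rw [← hc] at h2l h2r
    rcases he with ⟨ha, hb⟩ | ⟨hb, ha⟩
    · rw [← ha, ← hb] at h2r
      omega
    · rw [← hb] at h2l
      simp at h2l


/-- A disjoint union of cycles (i.e. a 2-regular graph) with exactly `n - 3`
vertices, where `n ≥ 7` and `n - 3 ≥ 4`, is potentially triangulable in the convex `K_n`. -/
theorem stmt18 {V : Type} [Fintype V] (G : SimpleGraph V) [DecidableRel G.Adj] (n : ℕ)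
    (hn : 7 ≤ n) (h4 : 4 ≤ n - 3) (hcard : Fintype.card V = n - 3)
    (hreg : ∀ v : V, G.degree v = 2) :
    PotentiallyTriangulable G n := by
  classical
  haveI : NeZero n := ⟨by omega⟩
  haveI : Fact (1 < n) := ⟨by omega⟩
  obtain ⟨f, hfinj, hf0, hfstep⟩ := placement G n hn hcard (exists_three_lists G hreg)
  refine ⟨f, hfinj, G.edgeFinset.image (Sym2.map f), ?_, ?_, ?_⟩
  · rw [Finset.coe_image, SimpleGraph.coe_edgeFinset]
  · -- no boundary edges in F'
    intro e he
    simp only [Finset.mem_image, SimpleGraph.mem_edgeFinset] at he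
    obtain ⟨e0, he0, rfl⟩ := he
    induction e0 using Sym2.ind with
    | _ u v =>
      rw [SimpleGraph.mem_edgeSet] at he0
      rintro ⟨i, hi⟩
      rw [Sym2.map_pair_eq, Sym2.eq_iff] at hi
      rcases hi with ⟨hu, hv⟩ | ⟨hu, hv⟩
      · exact hfstep v u he0.symm (by rw [hu, hv])
      · exact hfstep u v he0 (by rw [hu, hv])
  · -- the fan triangulation from vertex 0
    refine ⟨(Finset.Icc 2 (n - 2)).image (fun i : ℕ => s((0 : ZMod n), (i : ZMod n))),
      ?_, ?_, ?_, ?_⟩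
    · -- cardinality
      rw [Finset.card_image_of_injOn, Nat.card_Icc]
      · omega
      · intro i hi j hj hij
        simp only [Finset.coe_Icc, Set.mem_Icc] at hi hj
        rw [Sym2.eq_iff] at hij
        rcases hij with ⟨-, hij⟩ | ⟨h0, -⟩
        · have := congrArg ZMod.val hij
          rwa [ZMod.val_cast_of_lt (by omega), ZMod.val_cast_of_lt (by omega)] at this
        · have := congrArg ZMod.val h0.symm
          rw [ZMod.val_cast_of_lt (by omega), ZMod.val_zero] at this
          omega
    · -- diagonals
      intro e he
      simp only [Finset.mem_image, Finset.mem_Icc] at he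
      obtain ⟨i, ⟨hi2, hin⟩, rfl⟩ := he
      constructor
      · rw [Sym2.mk_isDiag_iff]
        intro h0
        have := congrArg ZMod.val h0
        rw [ZMod.val_zero, ZMod.val_cast_of_lt (by omega)] at this
        omega
      · rintro ⟨j, hj⟩
        rw [Sym2.eq_iff] at hj
        rcases hj with ⟨h0, h1⟩ | ⟨h0, h1⟩
        · rw [← h0, zero_add] at h1
          have := congrArg ZMod.val h1
          rw [ZMod.val_cast_of_lt (by omega), ZMod.val_one] at this
          omega
        · have hz : ((i + 1 : ℕ) : ZMod n) = 0 := by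
            push_cast
            rw [h1]
            exact h0.symm
          rw [ZMod.natCast_eq_zero_iff] at hz
          have := Nat.le_of_dvd (by omega) hz
          omega
    · -- non-crossing
      intro e he g hg
      simp only [Finset.mem_image] at he hg
      obtain ⟨i, -, rfl⟩ := he
      obtain ⟨j, -, rfl⟩ := hg
      exact not_cross_shared n _ _
    · -- disjoint from F'
      intro e he hef
      simp only [Finset.mem_image] at he
      obtain ⟨i, -, rfl⟩ := he
      simp only [Finset.mem_image, SimpleGraph.mem_edgeFinset] at hef
      obtain ⟨e0, -, heq⟩ := hef
      induction e0 using Sym2.ind with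
      | _ u v =>
        rw [Sym2.map_pair_eq, Sym2.eq_iff] at heq
        rcases heq with ⟨hu, -⟩ | ⟨-, hv⟩
        · exact hf0 u hu
        · exact hf0 v hv


end ConvexTri
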